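/- Let α > 0, q ≥ 2, and p ∈ (1,2] with 1/p + 1/q = 1. Let K ⊂ ℝⁿ be a centrally symmetric compact convex set with nonempty interior that is smooth and (α,q)-uniformly convex with respect to ‖·‖_K. Then the function ½‖·‖²_{K°} is (L, p)-Hölder smooth on K° with respect to ‖·‖_{K°}, where L = 2p(1 + (q/(2α))^{1/(q−1)}); that is, for all d₁, d₂ ∈ K°, ½‖d₂‖²_{K°} ≤ ½‖d₁‖²_{K°} + ⟨∇½‖·‖²_{K°}(d₁), d₂ − d₁⟩ + (L/p)‖d₂ − d₁‖^p_{K°}. -/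

import Mathlib

open scoped InnerProductSpace
open scoped Pointwise
open MeasureTheory

noncomputable section

abbrev Euc (n : ℕ) := EuclideanSpace ℝ (Fin n)

/-- The polar set `K° = {d | ⟪d, x⟫ ≤ 1 for all x ∈ K}`. -/
def polarSet {n : ℕ} (K : Set (Euc n)) : Set (Euc n) := {d | ∀ x ∈ K, ⟪d, x⟫_ℝ ≤ 1}

/-- The normal cone of `K` at `y`. -/
def normalCone {n : ℕ} (K : Set (Euc n)) (y : Euc n) : Set (Euc n) :=
  {d | ∀ x ∈ K, 0 ≤ ⟪d, y - x⟫_ℝ}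

/-- A set is smooth if at each boundary point there is exactly one normal direction in `∂K°`. -/
def SmoothSet {n : ℕ} (K : Set (Euc n)) : Prop :=
  ∀ x ∈ frontier K, ∃! d, d ∈ normalCone K x ∩ frontier (polarSet K)

/-- A set is strictly convex if the midpoint of two distinct boundary points is interior. -/
def StrictlyConvexSet {n : ℕ} (K : Set (Euc n)) : Prop :=
  ∀ x₁ ∈ frontier K, ∀ x₂ ∈ frontier K, x₁ ≠ x₂ → midpoint ℝ x₁ x₂ ∈ interior K

/-- `(α, q)`-uniform convexity of a set w.r.t. its gauge. -/
def UniformlyConvexSet {n : ℕ} (K : Set (Euc n)) (α q : ℝ) : Prop :=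
  ∀ x ∈ K, ∀ y ∈ K, ∀ z ∈ K, ∀ γ ∈ Set.Icc (0:ℝ) 1,
    γ • x + (1 - γ) • y + (α / q * (γ * (1 - γ)) * gauge K (x - y) ^ q) • z ∈ K

/-- The barrier function `F_K(x) = -ln(1 - ‖x‖_K) - ‖x‖_K`. -/
def FK {n : ℕ} (K : Set (Euc n)) (x : Euc n) : ℝ := -Real.log (1 - gauge K x) - gauge K x

/-- Fenchel conjugate of the barrier `F_K` (defined on `D_K = {‖x‖_K < 1}`). -/
def FstarK {n : ℕ} (K : Set (Euc n)) (d : Euc n) : ℝ :=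
  sSup ((fun x => ⟪x, d⟫_ℝ - FK K x) '' {x | gauge K x < 1})

/-- Bregman divergence `D_F(u, v) = F(u) - F(v) - ⟪∇F(v), u - v⟫`. -/
def breg {n : ℕ} (F : Euc n → ℝ) (u v : Euc n) : ℝ :=
  F u - F v - ⟪gradient F v, u - v⟫_ℝ

def l1Ball {n : ℕ} (r : ℝ) : Set (Euc n) := {x | ∑ i, |x i| ≤ r}
def linfBall {n : ℕ} (R : ℝ) : Set (Euc n) := {x | ∀ i, |x i| ≤ R}
def l2Ball {n : ℕ} (r : ℝ) : Set (Euc n) := Metric.closedBall 0 r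
def lqBall {n : ℕ} (q r : ℝ) : Set (Euc n) := {x | ∑ i, |x i| ^ q ≤ r ^ q}

open Topology Filter in
private lemma young_step {p q α s t r : ℝ} (hp1 : 1 < p) (hpq : 1/p + 1/q = 1)
    (hα : 0 < α) (hs : 0 < s) (ht : 0 ≤ t) (hr : 0 ≤ r) :
    s*r*t ≤ 1/p*(α^(1-p)*(s^(2-p)*t^p)) + α/q*(s^2*r^q) := by
  have hp0 : 0 < p := by linarith
  have hpinv : 0 < 1/p := by positivity
  have hqinv : 1/q = 1 - 1/p := by linarith
  have hqinvpos : 0 < 1/q := by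
    rw [hqinv]
    have : 1/p < 1 := by rw [div_lt_one hp0]; exact hp1
    linarith
  have hq0 : 0 < q := one_div_pos.mp hqinvpos
  have hsum : q + p = p*q := by
    field_simp at hpq
    linarith
  have hpq' : p/q = p - 1 := by
    rw [div_eq_iff hq0.ne']
    nlinarith [hsum]
  have hconj : Real.HolderConjugate p q := Real.holderConjugate_iff.mpr ⟨hp1, by rw [inv_eq_one_div, inv_eq_one_div]; exact hpq⟩
  set ε : ℝ := (α*s^2)^(1/q) with hε
  have hbase : 0 < α*s^2 := by positivity
  have hεpos : 0 < ε := Real.rpow_pos_of_pos hbase _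
  have hY := Real.young_inequality_of_nonneg
    (show (0:ℝ) ≤ s*t/ε by positivity) (show (0:ℝ) ≤ ε*r by positivity) hconj
  have hεq : ε^q = α*s^2 := by
    rw [hε, ← Real.rpow_mul hbase.le, one_div, inv_mul_cancel₀ hq0.ne', Real.rpow_one]
  have hεp : ε^p = α^(p-1)*((s^2:ℝ))^(p-1) := by
    rw [hε, ← Real.rpow_mul hbase.le, show 1/q*p = p - 1 by rw [← hpq']; ring,
      Real.mul_rpow hα.le (by positivity)]
  have h2 : (ε*r)^q = α*s^2*r^q := by rw [Real.mul_rpow hεpos.le hr, hεq]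
  have e2 : s^(2-p) * (((s^2:ℝ))^(p-1)) = s^p := by
    rw [show ((s^2 : ℝ)) = s^((2:ℝ)) by rw [← Real.rpow_natCast s 2]; norm_num,
      ← Real.rpow_mul hs.le, ← Real.rpow_add hs]
    congr 1
    ring
  have h3 : (s*t/ε)^p = α^(1-p)*(s^(2-p)*t^p) := by
    rw [Real.div_rpow (by positivity) hεpos.le, Real.mul_rpow hs.le ht, hεp]
    have e1 : α^(1-p) = (α^(p-1))⁻¹ := by
      rw [← Real.rpow_neg hα.le, neg_sub]
    have hden1 : (0:ℝ) < α^(p-1) := Real.rpow_pos_of_pos hα _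
    have hden2 : (0:ℝ) < ((s^2:ℝ))^(p-1) := Real.rpow_pos_of_pos (by positivity) _
    rw [e1, ← e2]
    field_simp
  calc s*r*t = (s*t/ε)*(ε*r) := by field_simp
    _ ≤ (s*t/ε)^p/p + (ε*r)^q/q := hY
    _ = 1/p*(α^(1-p)*(s^(2-p)*t^p)) + α/q*(s^2*r^q) := by rw [h3, h2]; ring

private lemma half_sq_le_rpow {p t : ℝ} (hp1 : 1 < p) (hp2 : p ≤ 2) (ht0 : 0 ≤ t) (ht2 : t ≤ 2) :
    t^2/2 ≤ t^p := by
  rcases eq_or_lt_of_le ht0 with h|h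
  · rw [← h, Real.zero_rpow (by linarith : p ≠ 0)]
    norm_num
  · have hsplit : (t:ℝ)^(2:ℕ) = t^p * t^(2-p) := by
      rw [← Real.rpow_natCast t 2, ← Real.rpow_add h]
      norm_num
    have h2 : t^(2-p) ≤ 2 := by
      calc t^(2-p) ≤ (2:ℝ)^(2-p) := Real.rpow_le_rpow ht0 ht2 (by linarith)
        _ ≤ (2:ℝ)^(1:ℝ) := Real.rpow_le_rpow_of_exponent_le one_le_two (by linarith)
        _ = 2 := Real.rpow_one 2
    nlinarith [Real.rpow_nonneg ht0 p]

private lemma alpha_pow_le {p q α : ℝ} (hp1 : 1 < p) (hq : 2 ≤ q) (hα : 0 < α) :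
    α^(1-p) ≤ (q/(2*α))^(p-1) := by
  have h1 : (α⁻¹ : ℝ) ≤ q/(2*α) := by
    rw [le_div_iff₀ (by positivity), show α⁻¹*(2*α) = 2 by field_simp]
    exact hq
  have e : (α⁻¹)^(p-1) = α^(1-p) := by
    rw [Real.inv_rpow hα.le, ← Real.rpow_neg hα.le, neg_sub]
  rw [← e]
  exact Real.rpow_le_rpow (by positivity) h1 (by linarith)

private lemma main_assembly {p q α C' s t u A r : ℝ}
    (hp1 : 1 < p) (hp2 : p ≤ 2) (hpq : 1/p + 1/q = 1) (hα : 0 < α)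
    (hspos : 0 < s) (hs1 : s ≤ 1) (ht0 : 0 ≤ t) (ht2 : t ≤ 2)
    (hupper : u ≤ s + t) (hlow : s ≤ u + t) (hr0 : 0 ≤ r)
    (hBound : u ≤ s - α/q*(r^q*s) + A + r*t)
    (hC' : α^(1-p) ≤ C') :
    u^2/2 ≤ s^2/2 + s*A + (2+2*C')*t^p := by
  have hp0 : 0 < p := by linarith
  have he2 : (u-s)^2 ≤ t^2 := sq_le_sq' (by linarith) (by linarith)
  have hY := young_step hp1 hpq hα hspos ht0 hr0
  have htp0 : 0 ≤ t^p := Real.rpow_nonneg ht0 _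
  have htple : t^2/2 ≤ t^p := half_sq_le_rpow hp1 hp2 ht0 ht2
  have hs2p : s^(2-p) ≤ 1 := Real.rpow_le_one hspos.le hs1 (by linarith)
  have hαp0 : 0 ≤ α^(1-p) := Real.rpow_nonneg hα.le _
  have hC'0 : 0 ≤ C' := le_trans hαp0 hC'
  have k0 : s^(2-p)*t^p ≤ t^p := by
    calc s^(2-p)*t^p ≤ 1*t^p := mul_le_mul_of_nonneg_right hs2p htp0
      _ = t^p := one_mul _
  have k1 : α^(1-p)*(s^(2-p)*t^p) ≤ C'*t^p := by
    calc α^(1-p)*(s^(2-p)*t^p) ≤ α^(1-p)*t^p := mul_le_mul_of_nonneg_left k0 hαp0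
      _ ≤ C'*t^p := mul_le_mul_of_nonneg_right hC' htp0
  have k2 : 1/p*(α^(1-p)*(s^(2-p)*t^p)) ≤ C'*t^p := by
    have h1p : 1/p ≤ 1 := by rw [div_le_one hp0]; linarith
    have hnn : 0 ≤ α^(1-p)*(s^(2-p)*t^p) :=
      mul_nonneg hαp0 (mul_nonneg (Real.rpow_nonneg hspos.le _) htp0)
    calc 1/p*(α^(1-p)*(s^(2-p)*t^p)) ≤ 1*(α^(1-p)*(s^(2-p)*t^p)) :=
          mul_le_mul_of_nonneg_right h1p hnn
      _ = α^(1-p)*(s^(2-p)*t^p) := one_mul _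
      _ ≤ C'*t^p := k1
  have hm : s*(u - s - A) ≤ s*(r*t - α/q*(r^q*s)) :=
    mul_le_mul_of_nonneg_left (by linarith) hspos.le
  have hid1 : u^2/2 - s^2/2 - s*A = (u-s)^2/2 + s*(u - s - A) := by ring
  have hid2 : s*(r*t - α/q*(r^q*s)) = s*r*t - α/q*(s^2*r^q) := by ring
  linarith [mul_nonneg hC'0 htp0]




open Topology Filter

set_option maxHeartbeats 1600000

/-- If `K` is smooth and `(α,q)`-uniformly convex, then `½‖·‖²_{K°}` is
`(L, p)`-Hölder smooth on `K°` w.r.t. `‖·‖_{K°}`, with `L = 2p(1 + (q/(2α))^{1/(q-1)})`. -/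
theorem holder_smoothness_of_half_sq_polar_gauge {n : ℕ}
    (K : Set (Euc n)) (hKcomp : IsCompact K) (hKconv : Convex ℝ K)
    (hKsymm : ∀ x ∈ K, -x ∈ K) (hKint : (interior K).Nonempty)
    (hsmooth : SmoothSet K)
    (α q p : ℝ) (hα : 0 < α) (hq : 2 ≤ q) (hp1 : 1 < p) (hp2 : p ≤ 2)
    (hpq : 1 / p + 1 / q = 1)
    (huc : UniformlyConvexSet K α q) :
    ∀ d₁ ∈ polarSet K, ∀ d₂ ∈ polarSet K,
      gauge (polarSet K) d₂ ^ 2 / 2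
        ≤ gauge (polarSet K) d₁ ^ 2 / 2
          + ⟪gradient (fun d => gauge (polarSet K) d ^ 2 / 2) d₁, d₂ - d₁⟫_ℝ
          + 2 * p * (1 + (q / (2 * α)) ^ (1 / (q - 1))) / p
              * gauge (polarSet K) (d₂ - d₁) ^ p := by
  intro d₁ hd₁ d₂ hd₂
  -- scalar basics
  have hp0 : (0:ℝ) < p := by linarith
  have hq0 : (0:ℝ) < q := by linarith
  have hsum : q + p = p*q := by
    have h1 := hpq
    field_simp at h1
    linarith
  have hexp : (1:ℝ)/(q-1) = p - 1 := by
    rw [div_eq_iff (by linarith : q - (1:ℝ) ≠ 0)]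
    linear_combination hsum
  -- geometry of K
  obtain ⟨x₀, hx₀⟩ := hKint
  obtain ⟨ε, hεpos, hεball⟩ : ∃ ε > 0, Metric.ball x₀ ε ⊆ K := by
    rcases Metric.mem_nhds_iff.mp (mem_interior_iff_mem_nhds.mp hx₀) with ⟨ε, hε, hb⟩
    exact ⟨ε, hε, hb⟩
  have hball0 : Metric.ball (0 : Euc n) ε ⊆ K := by
    intro y hy
    have hy' : ‖y‖ < ε := by simpa using mem_ball_zero_iff.mp hy
    have h1 : x₀ + y ∈ K := hεball (by
      rw [Metric.mem_ball, dist_eq_norm, add_sub_cancel_left]; exact hy')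
    have h2 : x₀ - y ∈ K := hεball (by
      rw [Metric.mem_ball, dist_eq_norm, sub_sub_cancel_left, norm_neg]; exact hy')
    have h3 : -(x₀ - y) ∈ K := hKsymm _ h2
    have h4 := hKconv h1 h3 (by norm_num : (0:ℝ) ≤ 1/2) (by norm_num : (0:ℝ) ≤ 1/2) (by norm_num)
    have h5 : (1/2 : ℝ) • (x₀ + y) + (1/2 : ℝ) • (-(x₀ - y)) = y := by
      module
    rwa [h5] at h4
  have hK0 : (0:Euc n) ∈ K := hball0 (by simp [hεpos])
  have hKnhds : K ∈ 𝓝 (0:Euc n) := Filter.mem_of_superset (Metric.ball_mem_nhds 0 hεpos) hball0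
  have hAbsK : Absorbent ℝ K := absorbent_nhds_zero hKnhds
  obtain ⟨R, hRpos, hKR⟩ : ∃ R > 0, ∀ x ∈ K, ‖x‖ ≤ R := by
    obtain ⟨R, hR⟩ := hKcomp.isBounded.subset_closedBall 0
    refine ⟨max R 1, by positivity, fun x hx => ?_⟩
    have := hR hx
    rw [Metric.mem_closedBall, dist_zero_right] at this
    exact le_trans this (le_max_left _ _)
  -- polar set basics
  have hP0 : (0:Euc n) ∈ polarSet K := by
    intro x hx; simp
  have hPconv : Convex ℝ (polarSet K) := by
    intro u hu v hv a b ha hb hab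
    intro x hx
    have h1 := hu x hx
    have h2 := hv x hx
    rw [inner_add_left, real_inner_smul_left, real_inner_smul_left]
    nlinarith
  have hPsymm : ∀ w ∈ polarSet K, -w ∈ polarSet K := by
    intro w hw x hx
    have := hw (-x) (hKsymm x hx)
    rw [inner_neg_right] at this
    rw [inner_neg_left]
    linarith
  have hPball : Metric.ball (0:Euc n) (1/R) ⊆ polarSet K := by
    intro w hw x hx
    have h1 : ⟪w,x⟫_ℝ ≤ ‖w‖ * ‖x‖ := real_inner_le_norm w x
    have h2 : ‖w‖ < 1/R := by simpa using mem_ball_zero_iff.mp hw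
    have h3 : ‖x‖ ≤ R := hKR x hx
    have h4 : ‖w‖*‖x‖ ≤ (1/R)*‖x‖ := mul_le_mul_of_nonneg_right h2.le (norm_nonneg x)
    have h5 : (1/R)*‖x‖ ≤ (1/R)*R := mul_le_mul_of_nonneg_left h3 (by positivity)
    have h6 : (1/R)*R = 1 := by field_simp
    linarith
  have hPnhds : polarSet K ∈ 𝓝 (0:Euc n) :=
    Filter.mem_of_superset (Metric.ball_mem_nhds _ (by positivity)) hPball
  have hAbsP : Absorbent ℝ (polarSet K) := absorbent_nhds_zero hPnhds
  have hPsub : polarSet K ⊆ Metric.closedBall 0 (2/ε) := by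
    intro w hw
    rw [Metric.mem_closedBall, dist_zero_right]
    by_cases hw0 : w = 0
    · rw [hw0, norm_zero]; positivity
    have hwn : 0 < ‖w‖ := norm_pos_iff.mpr hw0
    have hxK : (ε/2 * ‖w‖⁻¹) • w ∈ K := hball0 (by
      rw [mem_ball_zero_iff, norm_smul]
      rw [Real.norm_eq_abs, abs_of_pos (by positivity)]
      rw [mul_assoc, inv_mul_cancel₀ hwn.ne', mul_one]
      linarith)
    have h1 := hw _ hxK
    rw [real_inner_smul_right, real_inner_self_eq_norm_mul_norm] at h1
    have h2 : ε/2*‖w‖ ≤ 1 := by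
      have : ε/2 * ‖w‖⁻¹ * (‖w‖*‖w‖) = ε/2*‖w‖ := by field_simp
      linarith [this ▸ h1]
    rw [le_div_iff₀ hεpos]
    linarith
  have hPvb : Bornology.IsVonNBounded ℝ (polarSet K) :=
    (NormedSpace.isVonNBounded_closedBall ℝ _ _).subset hPsub
  -- gauge facts
  have hgP0 : ∀ w : Euc n, gauge (polarSet K) w = 0 ↔ w = 0 := fun w => gauge_eq_zero hAbsP hPvb
  have hgPpos : ∀ w : Euc n, w ≠ 0 → 0 < gauge (polarSet K) w :=
    fun w hw => (gauge_pos hAbsP hPvb).mpr hw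
  have hgadd : ∀ x y : Euc n, gauge (polarSet K) (x+y) ≤ gauge (polarSet K) x + gauge (polarSet K) y :=
    fun x y => gauge_add_le hPconv hAbsP x y
  have hgneg : ∀ w : Euc n, gauge (polarSet K) (-w) = gauge (polarSet K) w := gauge_neg hPsymm
  have hgmem : ∀ w ∈ polarSet K, gauge (polarSet K) w ≤ 1 := fun w hw => gauge_le_one_of_mem hw
  have hgnorm : ∀ w : Euc n, gauge (polarSet K) w ≤ R * ‖w‖ := by
    intro w
    have h1 := gauge_mono (absorbent_nhds_zero
      (Metric.ball_mem_nhds (0:Euc n) (by positivity : (0:ℝ) < 1/R))) hPball w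
    rw [gauge_ball (by positivity)] at h1
    have h2 : ‖w‖/(1/R) = R * ‖w‖ := by field_simp
    linarith [h2 ▸ h1]
  -- support function inequality
  have hSup : ∀ x ∈ K, ∀ w : Euc n, ⟪x, w⟫_ℝ ≤ gauge (polarSet K) w := by
    intro x hx w
    refine le_of_forall_gt_imp_ge_of_dense fun lam hlam => ?_
    obtain ⟨b, hb0, hblam, hmem⟩ := exists_lt_of_gauge_lt hAbsP hlam
    rcases Set.mem_smul_set.mp hmem with ⟨w', hw', rfl⟩
    rw [real_inner_smul_right]
    have h1 := hw' x hx
    rw [real_inner_comm] at h1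
    nlinarith
  -- maximizer
  have hMax : ∀ w : Euc n, ∃ xm ∈ K, ⟪xm, w⟫_ℝ = gauge (polarSet K) w := by
    intro w
    by_cases hw0 : w = 0
    · exact ⟨0, hK0, by simp [hw0, gauge_zero]⟩
    have hcont : ContinuousOn (fun x : Euc n => ⟪x, w⟫_ℝ) K :=
      (continuous_id.inner continuous_const).continuousOn
    obtain ⟨xm, hxm, hmax⟩ := hKcomp.exists_isMaxOn ⟨0, hK0⟩ hcont
    refine ⟨xm, hxm, le_antisymm (hSup xm hxm w) ?_⟩
    have hwn : 0 < ‖w‖ := norm_pos_iff.mpr hw0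
    have hMpos : 0 < ⟪xm, w⟫_ℝ := by
      have hxK : (ε/2 * ‖w‖⁻¹) • w ∈ K := hball0 (by
        rw [mem_ball_zero_iff, norm_smul, Real.norm_eq_abs, abs_of_pos (by positivity),
          mul_assoc, inv_mul_cancel₀ hwn.ne', mul_one]
        linarith)
      have h1 := hmax hxK
      simp only [Set.mem_setOf_eq] at h1
      rw [real_inner_smul_left, real_inner_self_eq_norm_mul_norm] at h1
      have h2 : 0 < ε/2*‖w‖⁻¹*(‖w‖*‖w‖) := by positivity
      linarith
    apply gauge_le_of_mem hMpos.le
    rw [Set.mem_smul_set_iff_inv_smul_mem₀ hMpos.ne']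
    intro x hx
    rw [real_inner_smul_left, real_inner_comm x w, inv_mul_eq_div]
    have h2 := hmax hx
    simp only [Set.mem_setOf_eq] at h2
    exact (div_le_one hMpos).mpr h2
  -- inner vs product of gauges
  have hInner : ∀ a w : Euc n, ⟪a, w⟫_ℝ ≤ gauge K a * gauge (polarSet K) w := by
    intro a w
    by_cases hgw : gauge (polarSet K) w = 0
    · have hw0 : w = 0 := (hgP0 w).mp hgw
      rw [hw0, inner_zero_right, gauge_zero, mul_zero]
    have hgwpos : 0 < gauge (polarSet K) w := lt_of_le_of_ne (gauge_nonneg w) (Ne.symm hgw)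
    rw [← div_le_iff₀ hgwpos]
    refine le_of_forall_gt_imp_ge_of_dense fun lam hlam => ?_
    obtain ⟨b, hb0, hblam, hmem⟩ := exists_lt_of_gauge_lt hAbsK hlam
    rcases Set.mem_smul_set.mp hmem with ⟨a', ha', rfl⟩
    rw [real_inner_smul_left, div_le_iff₀ hgwpos]
    nlinarith [hSup a' ha' w, gauge_nonneg (s := polarSet K) w]
  -- key uniform convexity estimate
  have hKey : ∀ w : Euc n, ∀ xm ∈ K, ⟪xm, w⟫_ℝ = gauge (polarSet K) w → ∀ x' ∈ K,
      ⟪x', w⟫_ℝ + α/q * gauge K (x' - xm) ^ q * gauge (polarSet K) w ≤ gauge (polarSet K) w := by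
    intro w xm hxmK hxmEq x' hx'
    have hstep : ∀ k : ℕ, ⟪x', w⟫_ℝ ≤ gauge (polarSet K) w
        - α/q*(1 - ((k:ℝ)+2)⁻¹)*gauge K (x' - xm)^q*gauge (polarSet K) w := by
      intro k
      have hk1 : (1:ℝ) ≤ (k:ℝ)+2 := by
        have := Nat.cast_nonneg (α := ℝ) k
        linarith
      have hγ0 : 0 < ((k:ℝ)+2)⁻¹ := by positivity
      have hγ1 : ((k:ℝ)+2)⁻¹ ≤ 1 := inv_le_one_of_one_le₀ hk1
      have hwm := huc x' hx' xm hxmK xm hxmK (((k:ℝ)+2)⁻¹) ⟨hγ0.le, hγ1⟩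
      have hle := hSup _ hwm w
      rw [inner_add_left, inner_add_left, real_inner_smul_left, real_inner_smul_left,
        real_inner_smul_left, hxmEq] at hle
      have h3 : ((k:ℝ)+2)⁻¹ * (⟪x', w⟫_ℝ + α/q*(1 - ((k:ℝ)+2)⁻¹)*gauge K (x' - xm)^q*gauge (polarSet K) w
          - gauge (polarSet K) w)
          = ((k:ℝ)+2)⁻¹*⟪x', w⟫_ℝ + (1-((k:ℝ)+2)⁻¹)*gauge (polarSet K) w
            + α/q*(((k:ℝ)+2)⁻¹*(1-((k:ℝ)+2)⁻¹))*gauge K (x' - xm)^q*gauge (polarSet K) w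
            - gauge (polarSet K) w := by ring
      have h4 : ((k:ℝ)+2)⁻¹ * (⟪x', w⟫_ℝ + α/q*(1 - ((k:ℝ)+2)⁻¹)*gauge K (x' - xm)^q*gauge (polarSet K) w
          - gauge (polarSet K) w) ≤ ((k:ℝ)+2)⁻¹ * 0 := by
        rw [mul_zero, h3]
        linarith
      have h5 := le_of_mul_le_mul_left h4 hγ0
      linarith
    have l0 : Tendsto (fun k : ℕ => ((k:ℝ)+2)⁻¹) atTop (𝓝 0) := by
      apply Filter.Tendsto.inv_tendsto_atTop
      exact tendsto_atTop_add_const_right atTop 2 tendsto_natCast_atTop_atTop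
    have hlim : Tendsto (fun k : ℕ => gauge (polarSet K) w
        - α/q*(1 - ((k:ℝ)+2)⁻¹)*gauge K (x' - xm)^q*gauge (polarSet K) w) atTop
        (𝓝 (gauge (polarSet K) w - α/q*(1 - 0)*gauge K (x' - xm)^q*gauge (polarSet K) w)) := by
      exact Filter.Tendsto.const_sub _
        ((((l0.const_sub 1).const_mul (α/q)).mul_const _).mul_const _)
    have hlast := ge_of_tendsto hlim (Filter.Eventually.of_forall hstep)
    linarith
  -- subgradient inequality
  have hSub : ∀ w : Euc n, ∀ xm ∈ K, ⟪xm, w⟫_ℝ = gauge (polarSet K) w → ∀ v : Euc n,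
      gauge (polarSet K) w^2/2 + gauge (polarSet K) w * ⟪xm, v - w⟫_ℝ
        ≤ gauge (polarSet K) v^2/2 := by
    intro w xm hxmK hxmEq v
    have h1 : ⟪xm, v⟫_ℝ ≤ gauge (polarSet K) v := hSup xm hxmK v
    have h2 : -gauge (polarSet K) v ≤ ⟪xm, v⟫_ℝ := by
      have h3 := hSup (-xm) (hKsymm xm hxmK) v
      rw [inner_neg_left] at h3
      linarith
    have h3 : ⟪xm, v⟫_ℝ^2 ≤ gauge (polarSet K) v^2 := sq_le_sq' h2 h1
    rw [inner_sub_right, hxmEq]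
    nlinarith [sq_nonneg (⟪xm, v⟫_ℝ - gauge (polarSet K) w)]
  -- main Hölder-smoothness inequality
  have hMain : ∀ w : Euc n, gauge (polarSet K) w ≤ 1 → ∀ xm ∈ K,
      ⟪xm, w⟫_ℝ = gauge (polarSet K) w → ∀ h : Euc n, gauge (polarSet K) h ≤ 2 →
      gauge (polarSet K) (w+h)^2/2 ≤ gauge (polarSet K) w^2/2
        + gauge (polarSet K) w * ⟪xm, h⟫_ℝ
        + (2+2*(q/(2*α))^(p-1))*gauge (polarSet K) h^p := by
    intro w hw1 xm hxmK hxmEq h ht2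
    have ht0 : 0 ≤ gauge (polarSet K) h := gauge_nonneg _
    have hs0 : 0 ≤ gauge (polarSet K) w := gauge_nonneg _
    have hC'0 : (0:ℝ) ≤ (q/(2*α))^(p-1) := Real.rpow_nonneg (by positivity) _
    have htp0 : 0 ≤ gauge (polarSet K) h^p := Real.rpow_nonneg ht0 _
    by_cases ht0' : gauge (polarSet K) h = 0
    · have h0 : h = 0 := (hgP0 h).mp ht0'
      rw [h0, add_zero, inner_zero_right, gauge_zero, Real.zero_rpow (by linarith : p ≠ 0)]
      linarith
    have htpos : 0 < gauge (polarSet K) h := lt_of_le_of_ne ht0 (Ne.symm ht0')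
    have htple := half_sq_le_rpow hp1 hp2 ht0 ht2
    by_cases hw0 : w = 0
    · rw [hw0, zero_add, gauge_zero]
      have : (0:ℝ)^2/2 + 0 * ⟪xm, h⟫_ℝ = 0 := by ring
      linarith [mul_nonneg hC'0 htp0]
    have hspos : 0 < gauge (polarSet K) w := hgPpos w hw0
    by_cases hwh0 : w + h = 0
    · have hhw : h = -w := eq_neg_of_add_eq_zero_right hwh0
      rw [hwh0, gauge_zero, hhw, inner_neg_right, hxmEq, hgneg]
      have hsle := half_sq_le_rpow hp1 hp2 hs0 (by linarith : gauge (polarSet K) w ≤ 2)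
      have hsp0 : 0 ≤ gauge (polarSet K) w^p := Real.rpow_nonneg hs0 _
      linarith [mul_nonneg hC'0 hsp0, hsle, hsp0]
    -- generic case
    obtain ⟨x', hx'K, hx'⟩ := hMax (w+h)
    have hupper : gauge (polarSet K) (w+h) ≤ gauge (polarSet K) w + gauge (polarSet K) h :=
      hgadd w h
    have hlower : gauge (polarSet K) w ≤ gauge (polarSet K) (w+h) + gauge (polarSet K) h := by
      have h1 : gauge (polarSet K) ((w+h) + (-h)) ≤ gauge (polarSet K) (w+h)
          + gauge (polarSet K) (-h) := hgadd _ _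
      rw [add_neg_cancel_right, hgneg] at h1
      exact h1
    have hBound : gauge (polarSet K) (w+h) ≤ gauge (polarSet K) w
        - α/q*(gauge K (x' - xm)^q*gauge (polarSet K) w) + ⟪xm, h⟫_ℝ
        + gauge K (x' - xm)*gauge (polarSet K) h := by
      have e1 : gauge (polarSet K) (w+h) = ⟪x', w⟫_ℝ + ⟪x', h⟫_ℝ := by
        rw [← hx', inner_add_right]
      have e2 : ⟪x', h⟫_ℝ = ⟪xm, h⟫_ℝ + ⟪x' - xm, h⟫_ℝ := by
        rw [inner_sub_left]; ring
      have e3 := hKey w xm hxmK hxmEq x' hx'K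
      have e4 := hInner (x' - xm) h
      linarith
    exact main_assembly hp1 hp2 hpq hα hspos hw1 ht0 ht2 hupper hlower (gauge_nonneg _)
      hBound (alpha_pow_le hp1 hq hα)
  -- gradient identification
  obtain ⟨x₁, hx₁K, hx₁⟩ := hMax d₁
  have hGrad : gradient (fun d => gauge (polarSet K) d ^ 2 / 2) d₁ = gauge (polarSet K) d₁ • x₁ := by
    have hg : HasGradientAt (fun d => gauge (polarSet K) d ^ 2 / 2)
        (gauge (polarSet K) d₁ • x₁) d₁ := by
      rw [hasGradientAt_iff_hasFDerivAt, hasFDerivAt_iff_isLittleO_nhds_zero]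
      rw [Asymptotics.isLittleO_iff]
      intro c hc
      have t2 : Tendsto (fun x : ℝ => x^(p-1)) (𝓝 0) (𝓝 0) := by
        have hcont := (Real.continuousAt_rpow_const 0 (p-1) (Or.inr (by linarith))).tendsto
        rwa [Real.zero_rpow (by linarith : p - 1 ≠ 0)] at hcont
      have l1 : Tendsto (fun h : Euc n => ((2+2*(q/(2*α))^(p-1))*R^p)*‖h‖^(p-1))
          (𝓝 0) (𝓝 0) := by
        have l2 := (t2.comp (tendsto_norm_zero (E := Euc n))).const_mul
          ((2+2*(q/(2*α))^(p-1))*R^p)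
        simpa using l2
      filter_upwards [l1.eventually (gt_mem_nhds hc),
        Metric.ball_mem_nhds (0:Euc n) (by positivity : (0:ℝ) < 1/R)] with h hlt hball
      simp only [InnerProductSpace.toDual_apply_apply, real_inner_smul_left]
      by_cases hh0 : h = 0
      · simp [hh0]
      have hhn : 0 < ‖h‖ := norm_pos_iff.mpr hh0
      have hgh : gauge (polarSet K) h ≤ R*‖h‖ := hgnorm h
      have hbn : ‖h‖ < 1/R := by simpa using mem_ball_zero_iff.mp hball
      have hgh1 : gauge (polarSet K) h ≤ 1 := by
        have : R*‖h‖ ≤ R*(1/R) := mul_le_mul_of_nonneg_left hbn.le hRpos.le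
        have hRR : R*(1/R) = 1 := by field_simp
        linarith
      have hub := hMain d₁ (hgmem d₁ hd₁) x₁ hx₁K hx₁ h (by linarith)
      have hlb := hSub d₁ x₁ hx₁K hx₁ (d₁ + h)
      rw [add_sub_cancel_left] at hlb
      have hE0 : 0 ≤ gauge (polarSet K) (d₁+h)^2/2 - gauge (polarSet K) d₁^2/2
          - gauge (polarSet K) d₁*⟪x₁, h⟫_ℝ := by linarith
      rw [Real.norm_eq_abs, abs_of_nonneg hE0]
      have c1 : gauge (polarSet K) h ^ p ≤ (R*‖h‖)^p :=
        Real.rpow_le_rpow (gauge_nonneg _) hgh (by linarith)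
      have c2 : (R*‖h‖)^p = R^p*‖h‖^p := Real.mul_rpow hRpos.le (norm_nonneg _)
      have c3 : ‖h‖^p = ‖h‖^(p-1)*‖h‖ := by
        rw [← Real.rpow_add_one (ne_of_gt hhn) (p-1)]
        norm_num
      have hC2 : (0:ℝ) ≤ 2+2*(q/(2*α))^(p-1) := by
        have : (0:ℝ) ≤ (q/(2*α))^(p-1) := Real.rpow_nonneg (by positivity) _
        linarith
      have c4 : (2+2*(q/(2*α))^(p-1))*gauge (polarSet K) h^p
          ≤ (2+2*(q/(2*α))^(p-1))*(R^p*(‖h‖^(p-1)*‖h‖)) := by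
        apply mul_le_mul_of_nonneg_left _ hC2
        rw [← c3, ← c2]
        exact c1
      have c5 : (2+2*(q/(2*α))^(p-1))*(R^p*(‖h‖^(p-1)*‖h‖))
          = (((2+2*(q/(2*α))^(p-1))*R^p)*‖h‖^(p-1))*‖h‖ := by ring
      have c6 : (((2+2*(q/(2*α))^(p-1))*R^p)*‖h‖^(p-1))*‖h‖ ≤ c*‖h‖ :=
        mul_le_mul_of_nonneg_right hlt.le (norm_nonneg _)
      linarith [c4, c5 ▸ c4, c6]
    exact hg.gradient
  -- conclusion
  have ht2fin : gauge (polarSet K) (d₂ - d₁) ≤ 2 := by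
    have h1 : gauge (polarSet K) (d₂ + (-d₁)) ≤ gauge (polarSet K) d₂
        + gauge (polarSet K) (-d₁) := hgadd _ _
    rw [hgneg] at h1
    rw [sub_eq_add_neg]
    linarith [hgmem d₁ hd₁, hgmem d₂ hd₂]
  have hfin := hMain d₁ (hgmem d₁ hd₁) x₁ hx₁K hx₁ (d₂ - d₁) ht2fin
  rw [show d₁ + (d₂ - d₁) = d₂ by abel] at hfin
  rw [hGrad, real_inner_smul_left, hexp,
    show 2 * p * (1 + (q / (2 * α)) ^ (p-1)) / p = 2 + 2*(q/(2*α))^(p-1) by field_simp]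
  exact hfin
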